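/- Let f : [0,1]^d → ℝ be twice differentiable with ‖∇²f(x)‖_∞ ≤ 2L on a cube B = ∏[c_j − h/2, c_j + h/2] ⊆ [0,1]^d. Define θ₀ = (1/h^d)∫_B f(x) dx and θ_i = (∫_B (f(x)−θ₀)(x_i−c_i) dx)/(∫_B (x_i−c_i)² dx). Then |f(x) − θ₀ − Σ_i θ_i(x_i − c_i)| ≤ (4√3 + 1) L d h² for all x ∈ B. -/

import Mathlib

open Set MeasureTheory

lemma prod_box_integral {d : ℕ} (a b : Fin d → ℝ) (G : Fin d → ℝ → ℝ) :
    ∫ x in Icc a b, ∏ j, G j (x j) = ∏ j, ∫ t in Icc (a j) (b j), G j t := by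
  have h1 : ∀ x : Fin d → ℝ, (Icc a b).indicator (fun x => ∏ j, G j (x j)) x
      = ∏ j, (Icc (a j) (b j)).indicator (G j) (x j) := by
    intro x
    by_cases hx : x ∈ Icc a b
    · rw [Set.indicator_of_mem hx]
      refine Finset.prod_congr rfl fun j _ => (Set.indicator_of_mem ?_ _).symm
      exact ⟨hx.1 j, hx.2 j⟩
    · rw [Set.indicator_of_notMem hx]
      have : ∃ j, x j ∉ Icc (a j) (b j) := by
        by_contra hc
        push_neg at hc
        exact hx ⟨fun j => (hc j).1, fun j => (hc j).2⟩
      obtain ⟨j, hj⟩ := this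
      exact (Finset.prod_eq_zero (Finset.mem_univ j) (Set.indicator_of_notMem hj _)).symm
  rw [← integral_indicator measurableSet_Icc]
  simp_rw [h1]
  rw [MeasureTheory.volume_pi, MeasureTheory.integral_fintype_prod_eq_prod
    (fun j => (Icc (a j) (b j)).indicator (G j))]
  exact Finset.prod_congr rfl fun j _ => integral_indicator measurableSet_Icc

lemma int_one (γ h : ℝ) (hh : 0 ≤ h) : ∫ _t in Icc (γ - h/2) (γ + h/2), (1:ℝ) = h := by
  simp [Real.volume_Icc]
  linarith

lemma box_single {d : ℕ} (c : Fin d → ℝ) (h : ℝ) (hh : 0 ≤ h) (i : Fin d) (F : ℝ → ℝ) :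
    ∫ x in Icc (fun j => c j - h/2) (fun j => c j + h/2), F (x i)
      = h^(d-1) * ∫ t in Icc (c i - h/2) (c i + h/2), F t := by
  have h1 : ∀ x : Fin d → ℝ, F (x i) = ∏ j, (if j = i then F (x j) else 1) := by
    intro x
    rw [Finset.prod_ite_eq' Finset.univ i (fun j => F (x j))]
    simp
  calc ∫ x in Icc (fun j => c j - h/2) (fun j => c j + h/2), F (x i)
      = ∫ x in Icc (fun j => c j - h/2) (fun j => c j + h/2),
          ∏ j, (fun t => if j = i then F t else 1) (x j) := by
        refine integral_congr_ae (Filter.Eventually.of_forall fun x => ?_)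
        exact h1 x
    _ = ∏ j, ∫ t in Icc ((fun j => c j - h/2) j) ((fun j => c j + h/2) j),
          (fun t => if j = i then F t else 1) t :=
        prod_box_integral (fun j => c j - h/2) (fun j => c j + h/2)
          (fun j t => if j = i then F t else 1)
    _ = h^(d-1) * ∫ t in Icc (c i - h/2) (c i + h/2), F t := by
        rw [← Finset.mul_prod_erase Finset.univ _ (Finset.mem_univ i)]
        simp only [if_pos rfl]
        rw [mul_comm]
        congr 1
        have : ∀ j ∈ Finset.univ.erase i,
            (∫ t in Icc (c j - h/2) (c j + h/2), if j = i then F t else 1) = h := by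
          intro j hj
          have hne : j ≠ i := Finset.ne_of_mem_erase hj
          simp only [if_neg hne]
          exact int_one _ _ hh
        rw [Finset.prod_congr rfl this, Finset.prod_const,
          Finset.card_erase_of_mem (Finset.mem_univ i), Finset.card_univ, Fintype.card_fin]

lemma box_pair_zero {d : ℕ} (c : Fin d → ℝ) (h : ℝ) (p q : Fin d) (hpq : p ≠ q)
    (F G : ℝ → ℝ) (hF : ∫ t in Icc (c p - h/2) (c p + h/2), F t = 0) :
    ∫ x in Icc (fun j => c j - h/2) (fun j => c j + h/2), F (x p) * G (x q) = 0 := by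
  have h1 : ∀ x : Fin d → ℝ, F (x p) * G (x q)
      = ∏ j, ((if j = p then F (x j) else 1) * (if j = q then G (x j) else 1)) := by
    intro x
    rw [Finset.prod_mul_distrib, Finset.prod_ite_eq' Finset.univ p (fun j => F (x j)),
      Finset.prod_ite_eq' Finset.univ q (fun j => G (x j))]
    simp
  calc ∫ x in Icc (fun j => c j - h/2) (fun j => c j + h/2), F (x p) * G (x q)
      = ∫ x in Icc (fun j => c j - h/2) (fun j => c j + h/2),
          ∏ j, (fun t => (if j = p then F t else 1) * (if j = q then G t else 1)) (x j) := by
        refine integral_congr_ae (Filter.Eventually.of_forall fun x => h1 x)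
    _ = ∏ j, ∫ t in Icc ((fun j => c j - h/2) j) ((fun j => c j + h/2) j),
          (fun t => (if j = p then F t else 1) * (if j = q then G t else 1)) t :=
        prod_box_integral (fun j => c j - h/2) (fun j => c j + h/2)
          (fun j t => (if j = p then F t else 1) * (if j = q then G t else 1))
    _ = 0 := by
        refine Finset.prod_eq_zero (Finset.mem_univ p) ?_
        simp only [if_pos rfl, if_neg hpq, mul_one]
        exact hF

lemma int_lin (γ h : ℝ) (hh : 0 ≤ h) : ∫ t in Icc (γ - h/2) (γ + h/2), (t - γ) = 0 := by
  rw [MeasureTheory.integral_Icc_eq_integral_Ioc,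
    ← intervalIntegral.integral_of_le (by linarith : γ - h/2 ≤ γ + h/2)]
  rw [intervalIntegral.integral_comp_sub_right (fun u => u) γ]
  rw [integral_id]
  ring

lemma int_sq (γ h : ℝ) (hh : 0 ≤ h) :
    ∫ t in Icc (γ - h/2) (γ + h/2), (t - γ)^2 = h^3/12 := by
  rw [MeasureTheory.integral_Icc_eq_integral_Ioc,
    ← intervalIntegral.integral_of_le (by linarith : γ - h/2 ≤ γ + h/2)]
  rw [intervalIntegral.integral_comp_sub_right (fun u => u^2) γ]
  rw [integral_pow]
  ring

theorem stmt_2 (d : ℕ) (hd : 1 ≤ d) (L h : ℝ) (hL : 0 < L) (hh : 0 < h)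
    (c : Fin d → ℝ) (f : (Fin d → ℝ) → ℝ)
    (B : Set (Fin d → ℝ))
    (hB : B = Icc (fun j => c j - h / 2) (fun j => c j + h / 2))
    (hBsub : B ⊆ Icc 0 1)
    (hdiff : Differentiable ℝ f)
    (hsmooth : ∀ x₁ ∈ B, ∀ x₂ ∈ B,
      |f x₁ - f x₂ - fderiv ℝ f x₂ (x₁ - x₂)| ≤ L * ‖x₁ - x₂‖ ^ 2)
    (θ₀ : ℝ) (hθ₀ : θ₀ = (1 / h ^ d) * ∫ x in B, f x)
    (θ : Fin d → ℝ)
    (hθ : ∀ i, θ i =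
      (∫ x in B, (f x - θ₀) * (x i - c i)) / (∫ x in B, (x i - c i) ^ 2)) :
    ∀ x ∈ B, |f x - θ₀ - ∑ i, θ i * (x i - c i)| ≤ (4 * Real.sqrt 3 + 1) * L * d * h ^ 2 := by
  have hmemB : ∀ y, y ∈ B ↔ ∀ j, |y j - c j| ≤ h / 2 := by
    intro y
    rw [hB, Set.mem_Icc]
    constructor
    · rintro ⟨h1, h2⟩ j
      rw [abs_le]
      exact ⟨by linarith [h1 j], by linarith [h2 j]⟩
    · intro hj
      refine ⟨fun j => ?_, fun j => ?_⟩ <;>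
        · have := abs_le.1 (hj j); simp only []; linarith [this.1, this.2]
  have hc : c ∈ B := by
    rw [hmemB]; intro j; simp only [sub_self, abs_zero]; positivity
  have hcomp : IsCompact B := hB ▸ isCompact_Icc
  have hmeas : MeasurableSet B := hB ▸ measurableSet_Icc
  have hvolBR : (volume B).toReal = h ^ d := by
    rw [hB, Real.volume_Icc_pi]
    have he : ∀ j : Fin d, (fun j => c j + h/2) j - (fun j => c j - h/2) j = h := by
      intro j; simp
    simp_rw [he]
    rw [Finset.prod_const, Finset.card_univ, Fintype.card_fin, ← ENNReal.ofReal_pow hh.le,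
      ENNReal.toReal_ofReal (by positivity)]
  have hvolfin : volume B < ⊤ := hcomp.measure_lt_top
  set a := f c with ha
  set b : Fin d → ℝ := fun j => fderiv ℝ f c (Pi.single j 1) with hb
  set g : (Fin d → ℝ) → ℝ := fun x => f x - a - ∑ j, b j * (x j - c j) with hg
  have hfd : ∀ v : Fin d → ℝ, fderiv ℝ f c v = ∑ j, b j * v j := by
    intro v
    have hv : v = ∑ j, v j • (Pi.single j 1 : Fin d → ℝ) := by
      funext k
      simp [Finset.sum_apply, Pi.single_apply]
    conv_lhs => rw [hv]
    rw [map_sum]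
    refine Finset.sum_congr rfl fun j _ => ?_
    rw [_root_.map_smul, smul_eq_mul, mul_comm]
  have hgb : ∀ x ∈ B, |g x| ≤ L * h^2 / 4 := by
    intro x hx
    have h1 := hsmooth x hx c hc
    have h2 : fderiv ℝ f c (x - c) = ∑ j, b j * (x j - c j) := by
      rw [hfd]
      exact Finset.sum_congr rfl fun j _ => by rw [Pi.sub_apply]
    have hnorm : ‖x - c‖ ≤ h / 2 := by
      rw [pi_norm_le_iff_of_nonneg (by positivity)]
      intro j
      rw [Pi.sub_apply, Real.norm_eq_abs]
      exact (hmemB x).1 hx j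
    have h3 : |g x| = |f x - f c - fderiv ℝ f c (x - c)| := by
      rw [h2, hg]
    rw [h3]
    calc |f x - f c - fderiv ℝ f c (x - c)| ≤ L * ‖x - c‖^2 := h1
      _ ≤ L * (h/2)^2 :=
          mul_le_mul_of_nonneg_left (pow_le_pow_left₀ (norm_nonneg _) hnorm 2) hL.le
      _ = L * h^2/4 := by ring
  have hgc : Continuous g := by
    refine Continuous.sub (Continuous.sub hdiff.continuous continuous_const) ?_
    exact continuous_finset_sum _ fun j _ =>
      continuous_const.mul ((continuous_apply j).sub continuous_const)
  have hfint : IntegrableOn f B := hdiff.continuous.continuousOn.integrableOn_compact hcomp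
  have hgint : IntegrableOn g B := hgc.continuousOn.integrableOn_compact hcomp
  have hIlin : ∀ j, ∫ x in B, (x j - c j) = 0 := by
    intro j
    rw [hB]
    have := box_single c h hh.le j (fun t => t - c j)
    rw [this, int_lin _ _ hh.le, mul_zero]
  have hISq : ∀ j, ∫ x in B, (x j - c j)^2 = h^(d-1) * (h^3/12) := by
    intro j
    rw [hB]
    have := box_single c h hh.le j (fun t => (t - c j)^2)
    rw [this, int_sq _ _ hh.le]
  have hcross : ∀ p q : Fin d, p ≠ q → ∫ x in B, (x p - c p) * (x q - c q) = 0 := by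
    intro p q hpq
    rw [hB]
    have := box_pair_zero c h p q hpq (fun t => t - c p) (fun t => t - c q)
      (int_lin _ _ hh.le)
    simpa using this
  have hcoordint : ∀ (F : (Fin d → ℝ) → ℝ), Continuous F → IntegrableOn F B := by
    intro F hF
    exact hF.continuousOn.integrableOn_compact hcomp
  have hlinsum_cont : Continuous (fun x : Fin d → ℝ => ∑ j, b j * (x j - c j)) :=
    continuous_finset_sum _ fun j _ =>
      continuous_const.mul ((continuous_apply j).sub continuous_const)
  have hIlinsum : ∫ x in B, (∑ j, b j * (x j - c j)) = 0 := by
    rw [integral_finset_sum _ fun j _ => hcoordint (fun x => b j * (x j - c j))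
      (continuous_const.mul ((continuous_apply j).sub continuous_const))]
    refine Finset.sum_eq_zero fun j _ => ?_
    rw [integral_const_mul, hIlin j, mul_zero]
  have hhd : (0:ℝ) < h^d := by positivity
  have hintf_split : ∫ x in B, f x = (∫ x in B, g x) + a * h^d := by
    have hfeq : ∀ x : Fin d → ℝ, f x = g x + ((∑ j, b j * (x j - c j)) + a) := by
      intro x; rw [hg]; ring
    calc ∫ x in B, f x
        = ∫ x in B, (g x + ((∑ j, b j * (x j - c j)) + a)) :=
          integral_congr_ae (Filter.Eventually.of_forall fun x => hfeq x)
      _ = (∫ x in B, g x) + ∫ x in B, ((∑ j, b j * (x j - c j)) + a) := by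
          rw [integral_add hgint (hcoordint (fun x => (∑ j, b j * (x j - c j)) + a) (hlinsum_cont.add continuous_const))]
      _ = (∫ x in B, g x) + ((∫ x in B, (∑ j, b j * (x j - c j))) + ∫ _x in B, a) := by
          rw [integral_add (hcoordint _ hlinsum_cont) (hcoordint _ continuous_const)]
      _ = (∫ x in B, g x) + a * h^d := by
          rw [hIlinsum, setIntegral_const, measureReal_def, hvolBR, smul_eq_mul]
          ring
  have hθ₀a : |θ₀ - a| ≤ L * h^2/4 := by
    have hgle : ‖∫ x in B, g x‖ ≤ (L*h^2/4) * (volume B).toReal :=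
      norm_setIntegral_le_of_norm_le_const hvolfin
        (fun x hx => by rw [Real.norm_eq_abs]; exact hgb x hx)
    rw [hvolBR] at hgle
    rw [Real.norm_eq_abs] at hgle
    have heq : θ₀ - a = (1/h^d) * ∫ x in B, g x := by
      have hne : h^d ≠ 0 := by positivity
      rw [hθ₀, hintf_split]
      field_simp
      ring
    rw [heq, abs_mul, abs_of_pos (by positivity : (0:ℝ) < 1/h^d)]
    calc (1/h^d) * |∫ x in B, g x| ≤ (1/h^d) * ((L*h^2/4) * h^d) := by
          apply mul_le_mul_of_nonneg_left hgle (by positivity)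
      _ = L*h^2/4 := by field_simp
  set S : ℝ := h^(d-1) * (h^3/12) with hS
  have hSpos : (0:ℝ) < S := by rw [hS]; positivity
  have hθib : ∀ i, |θ i - b i| ≤ 3/2 * L * h := by
    intro i
    have hgiR : ‖∫ x in B, g x * (x i - c i)‖ ≤ (L*h^2/4 * (h/2)) * (volume B).toReal := by
      refine norm_setIntegral_le_of_norm_le_const hvolfin (fun x hx => ?_)
      rw [Real.norm_eq_abs, abs_mul]
      have h1 := hgb x hx
      have h2 := (hmemB x).1 hx i
      have := abs_nonneg (g x)
      have := abs_nonneg (x i - c i)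
      nlinarith
    rw [hvolBR, Real.norm_eq_abs] at hgiR
    have hnum : ∫ x in B, (f x - θ₀) * (x i - c i)
        = b i * S + ∫ x in B, g x * (x i - c i) := by
      have hsplit : ∀ x : Fin d → ℝ, (f x - θ₀) * (x i - c i)
          = g x * (x i - c i) + ((∑ j, b j * ((x j - c j) * (x i - c i)))
              + (a - θ₀) * (x i - c i)) := by
        intro x
        have hfx : f x - θ₀ = g x + (∑ j, b j * (x j - c j)) + (a - θ₀) := by
          rw [hg]; ring
        rw [hfx, add_mul, add_mul, Finset.sum_mul]
        have : ∀ j : Fin d, b j * (x j - c j) * (x i - c i)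
            = b j * ((x j - c j) * (x i - c i)) := fun j => by ring
        rw [Finset.sum_congr rfl fun j _ => this j]
        ring
      have hint1 : IntegrableOn (fun x : Fin d → ℝ => g x * (x i - c i)) B :=
        hcoordint _ (hgc.mul ((continuous_apply i).sub continuous_const))
      have hint2 : IntegrableOn
          (fun x : Fin d → ℝ => ∑ j, b j * ((x j - c j) * (x i - c i))) B :=
        hcoordint _ (continuous_finset_sum _ fun j _ => continuous_const.mul
          ((((continuous_apply j).sub continuous_const)).mul
            ((continuous_apply i).sub continuous_const)))
      have hint3 : IntegrableOn (fun x : Fin d → ℝ => (a - θ₀) * (x i - c i)) B :=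
        hcoordint _ (continuous_const.mul ((continuous_apply i).sub continuous_const))
      calc ∫ x in B, (f x - θ₀) * (x i - c i)
          = ∫ x in B, (g x * (x i - c i) + ((∑ j, b j * ((x j - c j) * (x i - c i)))
              + (a - θ₀) * (x i - c i))) :=
            integral_congr_ae (Filter.Eventually.of_forall fun x => hsplit x)
        _ = (∫ x in B, g x * (x i - c i))
              + ∫ x in B, ((∑ j, b j * ((x j - c j) * (x i - c i)))
                + (a - θ₀) * (x i - c i)) := by
            rw [integral_add hint1 (hcoordint (fun x => (∑ j, b j * ((x j - c j) * (x i - c i))) + (a - θ₀) * (x i - c i)) ((continuous_finset_sum _ fun j _ => continuous_const.mul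
              ((((continuous_apply j).sub continuous_const)).mul
                ((continuous_apply i).sub continuous_const))).add
              (continuous_const.mul ((continuous_apply i).sub continuous_const))))]
        _ = (∫ x in B, g x * (x i - c i))
              + ((∫ x in B, (∑ j, b j * ((x j - c j) * (x i - c i))))
                + ∫ x in B, (a - θ₀) * (x i - c i)) := by
            rw [integral_add hint2 hint3]
        _ = b i * S + ∫ x in B, g x * (x i - c i) := by
            have e1 : ∫ x in B, (∑ j, b j * ((x j - c j) * (x i - c i))) = b i * S := by
              rw [integral_finset_sum _ fun j _ => hcoordint (fun x => b j * ((x j - c j) * (x i - c i))) (continuous_const.mul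
                ((((continuous_apply j).sub continuous_const)).mul
                  ((continuous_apply i).sub continuous_const)))]
              have e2 : ∀ j : Fin d, (∫ x in B, b j * ((x j - c j) * (x i - c i)))
                  = if j = i then b i * S else 0 := by
                intro j
                by_cases hji : j = i
                · subst hji
                  rw [if_pos rfl, integral_const_mul]
                  congr 1
                  rw [← hISq j]
                  exact integral_congr_ae (Filter.Eventually.of_forall fun x => by ring)
                · rw [if_neg hji, integral_const_mul, hcross j i hji, mul_zero]
              rw [Finset.sum_congr rfl fun j _ => e2 j, Finset.sum_ite_eq' Finset.univ i
                (fun _ => b i * S)]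
              simp
            have e3 : ∫ x in B, (a - θ₀) * (x i - c i) = 0 := by
              rw [integral_const_mul, hIlin i, mul_zero]
            rw [e1, e3]
            ring
    have hθi : θ i = b i + (∫ x in B, g x * (x i - c i)) / S := by
      rw [hθ i, hnum, hISq i]
      field_simp
    rw [hθi]
    have habs : |b i + (∫ x in B, g x * (x i - c i)) / S - b i|
        = |∫ x in B, g x * (x i - c i)| / S := by
      rw [add_sub_cancel_left, abs_div, abs_of_pos hSpos]
    rw [habs, div_le_iff₀ hSpos]
    have hhd1 : h^(d-1) * h = h^d := by
      rw [← pow_succ]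
      congr 1
      omega
    calc |∫ x in B, g x * (x i - c i)| ≤ L*h^2/4 * (h/2) * h^d := hgiR
      _ = 3/2 * L * h * S := by
          rw [hS, ← hhd1]; ring
  intro x hx
  have hx_coord : ∀ j, |x j - c j| ≤ h/2 := (hmemB x).1 hx
  have key : f x - θ₀ - ∑ i, θ i * (x i - c i)
      = g x + (a - θ₀) - ∑ i, (θ i - b i) * (x i - c i) := by
    rw [hg]
    rw [Finset.sum_congr rfl fun i (_ : i ∈ Finset.univ) =>
      (sub_mul (θ i) (b i) (x i - c i) : (θ i - b i) * (x i - c i) = _)]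
    rw [Finset.sum_sub_distrib]
    ring
  rw [key]
  have h1 := hgb x hx
  have h2 : |a - θ₀| ≤ L*h^2/4 := by rw [abs_sub_comm]; exact hθ₀a
  have h3 : |∑ i, (θ i - b i) * (x i - c i)| ≤ d * (3/4 * L * h^2) := by
    calc |∑ i, (θ i - b i) * (x i - c i)| ≤ ∑ i, |(θ i - b i) * (x i - c i)| :=
          Finset.abs_sum_le_sum_abs _ _
      _ ≤ ∑ _i : Fin d, (3/4 * L * h^2) := by
          refine Finset.sum_le_sum fun i _ => ?_
          rw [abs_mul]
          have h4 := hθib i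
          have h5 := hx_coord i
          have := abs_nonneg (θ i - b i)
          have := abs_nonneg (x i - c i)
          nlinarith
      _ = d * (3/4 * L * h^2) := by
          rw [Finset.sum_const, Finset.card_univ, Fintype.card_fin, nsmul_eq_mul]
  have hd1 : (1:ℝ) ≤ d := by exact_mod_cast hd
  have hs3 : (1:ℝ) ≤ Real.sqrt 3 := by
    rw [show (1:ℝ) = Real.sqrt 1 by simp]
    exact Real.sqrt_le_sqrt (by norm_num)
  calc |g x + (a - θ₀) - ∑ i, (θ i - b i) * (x i - c i)|
      ≤ |g x + (a - θ₀)| + |∑ i, (θ i - b i) * (x i - c i)| := abs_sub _ _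
    _ ≤ (|g x| + |a - θ₀|) + |∑ i, (θ i - b i) * (x i - c i)| := by
        have := abs_add_le (g x) (a - θ₀)
        linarith
    _ ≤ (L*h^2/4 + L*h^2/4) + d * (3/4 * L * h^2) := by linarith
    _ ≤ (4 * Real.sqrt 3 + 1) * L * d * h ^ 2 := by
        have hLh : 0 < L * h^2 := by positivity
        nlinarith [mul_le_mul_of_nonneg_right hd1 hLh.le,
          mul_nonneg (mul_nonneg (sub_nonneg.2 hs3) hLh.le) (by linarith : (0:ℝ) ≤ (d:ℝ))]
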